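/- If an open set Ω ⊆ ℝⁿ satisfies the ε-ball condition, then for every pair of boundary points a, x ∈ ∂Ω one has |⟨x − a, d_a⟩| ≤ ‖x − a‖²/(2ε). -/
import Mathlib


open Metric
open scoped RealInnerProductSpace

/-- If an open set `Ω ⊆ ℝⁿ` satisfies the ε-ball condition, then for boundary points `a, x`
one has `|⟨x − a, d_a⟩| ≤ ‖x − a‖²/(2ε)`. -/
theorem stmt_1 {n : ℕ} (hn : 2 ≤ n) (ε : ℝ) (hε : 0 < ε)
    (Ω : Set (EuclideanSpace ℝ (Fin n))) (hΩ : IsOpen Ω)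
    (a x : EuclideanSpace ℝ (Fin n)) (ha : a ∈ frontier Ω) (hx : x ∈ frontier Ω)
    (da : EuclideanSpace ℝ (Fin n)) (hda : ‖da‖ = 1)
    (ha1 : ball (a - ε • da) ε ⊆ Ω) (ha2 : ball (a + ε • da) ε ⊆ (closure Ω)ᶜ) :
    |(⟪x - a, da⟫)| ≤ ‖x - a‖ ^ 2 / (2 * ε) := by
  have hxc : x ∈ closure Ω := frontier_subset_closure hx
  have hxn : x ∉ Ω := by rw [hΩ.frontier_eq] at hx; exact hx.2
  have h1 : ε ≤ dist x (a - ε • da) :=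
    not_lt.1 fun h => hxn (ha1 (mem_ball.2 h))
  have h2 : ε ≤ dist x (a + ε • da) :=
    not_lt.1 fun h => (ha2 (mem_ball.2 h)) hxc
  rw [dist_eq_norm] at h1 h2
  have hεn : ‖ε‖ = ε := by rw [Real.norm_eq_abs, abs_of_pos hε]
  have e1 : ‖x - (a - ε • da)‖ ^ 2 = ‖x - a‖ ^ 2 + 2 * (ε * ⟪x - a, da⟫) + ε ^ 2 := by
    have hh : x - (a - ε • da) = (x - a) + ε • da := by abel
    rw [hh, norm_add_sq_real, real_inner_smul_right, norm_smul, hda, hεn, mul_one]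
  have e2 : ‖x - (a + ε • da)‖ ^ 2 = ‖x - a‖ ^ 2 - 2 * (ε * ⟪x - a, da⟫) + ε ^ 2 := by
    have hh : x - (a + ε • da) = (x - a) - ε • da := by abel
    rw [hh, norm_sub_sq_real, real_inner_smul_right, norm_smul, hda, hεn, mul_one]
  have s1 : ε ^ 2 ≤ ‖x - (a - ε • da)‖ ^ 2 := by nlinarith [norm_nonneg (x - (a - ε • da))]
  have s2 : ε ^ 2 ≤ ‖x - (a + ε • da)‖ ^ 2 := by nlinarith [norm_nonneg (x - (a + ε • da))]
  rw [le_div_iff₀ (by positivity : (0:ℝ) < 2 * ε)]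
  rcases abs_cases (⟪x - a, da⟫ : ℝ) with ⟨h, _⟩ | ⟨h, _⟩ <;> rw [h] <;> nlinarith
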